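/- Suppose α ∈ (1,2). Then there exists a finite real number L such that the function x ↦ (x+1)·ψ_{αρ}(x) − (α−1)·∫₁^x ψ_{αρ}(u) du tends to L as x → ∞. -/

import Mathlib

open Real MeasureTheory Set Filter intervalIntegral
open scoped Topology

/-- `ψ_{αρ}(u) = (u−1)^{αρ̂−1}(u+1)^{αρ−1}` where `ρ̂ = 1 − ρ`. -/
noncomputable def psiRho (α ρ : ℝ) (u : ℝ) : ℝ :=
  (u - 1) ^ (α * (1 - ρ) - 1) * (u + 1) ^ (α * ρ - 1)

/-- `ψ_{αρ̂}(u) = (u−1)^{αρ−1}(u+1)^{αρ̂−1}` where `ρ̂ = 1 − ρ`. -/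
noncomputable def psiRhoHat (α ρ : ℝ) (u : ℝ) : ℝ :=
  (u - 1) ^ (α * ρ - 1) * (u + 1) ^ (α * (1 - ρ) - 1)

/-- `g(y) = (y−1)^{αρ}(y+1)^{αρ̂−1}`. -/
noncomputable def gfun (α ρ : ℝ) (y : ℝ) : ℝ :=
  (y - 1) ^ (α * ρ) * (y + 1) ^ (α * (1 - ρ) - 1)

/-- `z(x,y) = |xy−1|/|x−y|`. -/
noncomputable def zfun (x y : ℝ) : ℝ := |x * y - 1| / |x - y|

/-- `c_{αρ} = 2^{αρ}·π·αρ·Γ(αρ)/Γ(1−αρ̂)`. -/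
noncomputable def cRho (α ρ : ℝ) : ℝ :=
  2 ^ (α * ρ) * π * (α * ρ) * Real.Gamma (α * ρ) / Real.Gamma (1 - α * (1 - ρ))

/-- The harmonic function `v₁` (defined piecewise for `x > 1` and `x < −1`). -/
noncomputable def v1fun (α ρ : ℝ) (x : ℝ) : ℝ :=
  if 1 < x then
    Real.sin (π * (α * (1 - ρ))) *
      ((x + 1) * psiRho α ρ x - max (α - 1) 0 * ∫ u in (1:ℝ)..x, psiRho α ρ u)
  else
    Real.sin (π * (α * ρ)) *
      ((|x| - 1) * psiRhoHat α ρ |x| - max (α - 1) 0 * ∫ u in (1:ℝ)..|x|, psiRhoHat α ρ u)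

/-- The explicit Profeta–Simon Green function `U(x,y)` (for `x > y > 1` resp. `x < −1 < 1 < y`). -/
noncomputable def Ufun (α ρ : ℝ) (x y : ℝ) : ℝ :=
  if 1 < x then
    (2 ^ (1 - α) / (Real.Gamma (α * ρ) * Real.Gamma (α * (1 - ρ)))) *
      ((x - y) ^ (α - 1) * (∫ u in (1:ℝ)..zfun x y, psiRhoHat α ρ u)
        - max (α - 1) 0 * (∫ u in (1:ℝ)..y, psiRhoHat α ρ u) * ∫ u in (1:ℝ)..x, psiRho α ρ u)
  else
    (Real.sin (π * (α * ρ)) / Real.sin (π * (α * (1 - ρ)))) *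
    (2 ^ (1 - α) / (Real.Gamma (α * ρ) * Real.Gamma (α * (1 - ρ)))) *
      ((y - x) ^ (α - 1) * (∫ u in (1:ℝ)..zfun x y, psiRhoHat α ρ u)
        - max (α - 1) 0 * (∫ u in (1:ℝ)..y, psiRhoHat α ρ u) * ∫ u in (1:ℝ)..|x|, psiRhoHat α ρ u)

/-- For `α ∈ (1,2)`, the function `x ↦ (x+1)ψ_{αρ}(x) − (α−1)∫₁^x ψ_{αρ}(u) du` converges to a
finite limit as `x → ∞`. -/
theorem stmt_19 (α ρ : ℝ) (hα1 : 1 < α) (hα2 : α < 2) (hρ0 : 0 < ρ) (hρ1 : ρ < 1)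
    (hαρ : α * ρ < 1) (hαρh : α * (1 - ρ) < 1) :
    ∃ L : ℝ, Tendsto (fun x : ℝ =>
        (x + 1) * psiRho α ρ x - (α - 1) * ∫ u in (1:ℝ)..x, psiRho α ρ u)
      atTop (𝓝 L) := by
  set a := α * (1 - ρ) with ha_def
  set b := α * ρ with hb_def
  have hab : a + b = α := by simp only [ha_def, hb_def]; ring
  have hρ' : 0 < 1 - ρ := by linarith
  have ha0 : 0 < a := by positivity
  have hb0 : 0 < b := by positivity
  have hψdef : ∀ u : ℝ, psiRho α ρ u = (u - 1) ^ (a - 1) * (u + 1) ^ (b - 1) := fun u => rfl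
  have hcont : ∀ s : Set ℝ, (∀ u ∈ s, 1 < u) → ∀ p q : ℝ,
      ContinuousOn (fun u : ℝ => (u - 1) ^ p * (u + 1) ^ q) s := by
    intro s hs p q
    apply ContinuousOn.mul
    · exact ((continuous_id.sub continuous_const).continuousOn).rpow_const
        fun u hu => Or.inl (by have := hs u hu; intro h; simp only [Pi.sub_apply, id_eq] at h; linarith)
    · exact ((continuous_id.add continuous_const).continuousOn).rpow_const
        fun u hu => Or.inl (by have := hs u hu; intro h; simp only [Pi.add_apply, id_eq] at h; linarith)
  -- integrability of ψ on [1,2]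
  have hψ12 : IntervalIntegrable (psiRho α ρ) volume 1 2 := by
    have hbase : IntervalIntegrable (fun u : ℝ => (u - 1) ^ (a - 1)) volume 1 2 := by
      have := (intervalIntegral.intervalIntegrable_rpow' (a := 0) (b := 1)
        (r := a - 1) (by linarith)).comp_sub_right 1
      norm_num at this
      exact this
    rw [intervalIntegrable_iff_integrableOn_Ioc_of_le (by norm_num)] at hbase ⊢
    refine Integrable.mono hbase ?_ ?_
    · exact ((hcont (Ioc 1 2) (fun u hu => hu.1) (a - 1) (b - 1)).aestronglyMeasurable
        measurableSet_Ioc)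
    · filter_upwards [ae_restrict_mem measurableSet_Ioc] with u hu
      have h1 : 0 < u - 1 := by linarith [hu.1]
      have h2 : (1:ℝ) ≤ u + 1 := by linarith [hu.1]
      rw [hψdef, Real.norm_eq_abs, Real.norm_eq_abs, abs_of_nonneg (by positivity),
        abs_of_nonneg (by positivity : (0:ℝ) ≤ (u-1)^(a-1))]
      calc (u - 1) ^ (a - 1) * (u + 1) ^ (b - 1)
          ≤ (u - 1) ^ (a - 1) * 1 := by
            gcongr
            exact Real.rpow_le_one_of_one_le_of_nonpos h2 (by linarith)
        _ = (u - 1) ^ (a - 1) := mul_one _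
  -- notation
  set ψ := psiRho α ρ with hψ
  set h' : ℝ → ℝ := fun u =>
    (a - 1) * ((u - 1) ^ (a - 2) * (u + 1) ^ b) + b * ((u - 1) ^ (a - 1) * (u + 1) ^ (b - 1))
    with hh'
  set G : ℝ → ℝ := fun u => (2 * (a - 1)) * ((u - 1) ^ (a - 2) * (u + 1) ^ (b - 1)) with hG
  set f : ℝ → ℝ := fun u => (u - 1) ^ (a - 1) * (u + 1) ^ b with hf
  -- derivative of f
  have hderiv : ∀ u : ℝ, 1 < u → HasDerivAt f (h' u) u := by
    intro u hu
    have h1 : HasDerivAt (fun u : ℝ => (u - 1) ^ (a - 1)) ((a - 1) * (u - 1) ^ (a - 2)) u := by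
      have := (Real.hasDerivAt_rpow_const (x := u - 1) (p := a - 1)
        (Or.inl (by intro h; linarith))).comp u ((hasDerivAt_id u).sub_const 1)
      simpa [Function.comp_def, show a - 1 - 1 = a - 2 by ring] using this
    have h2 : HasDerivAt (fun u : ℝ => (u + 1) ^ b) (b * (u + 1) ^ (b - 1)) u := by
      have := (Real.hasDerivAt_rpow_const (x := u + 1) (p := b)
        (Or.inl (by intro h; linarith))).comp u ((hasDerivAt_id u).add_const 1)
      simpa [Function.comp_def] using this
    have := h1.mul h2
    refine this.congr_deriv ?_
    simp only [hh']
    ring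
  -- pointwise identity  h' - (α-1)ψ = G  on (1,∞)
  have hkey : ∀ u : ℝ, 1 < u → h' u - (α - 1) * ψ u = G u := by
    intro u hu
    have hu1 : u - 1 ≠ 0 := by intro h; linarith
    have hu2 : u + 1 ≠ 0 := by intro h; linarith
    have e1 : (u + 1) ^ b = (u + 1) ^ (b - 1) * (u + 1) := by
      rw [← Real.rpow_add_one hu2 (b - 1)]; congr 1; ring
    have e2 : (u - 1) ^ (a - 1) = (u - 1) ^ (a - 2) * (u - 1) := by
      rw [← Real.rpow_add_one hu1 (a - 2)]; congr 1; ring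
    simp only [hh', hG, hψdef]
    rw [e1, e2, ← hab]
    ring
  -- integrability of G on (2, ∞)
  have hGbase : IntegrableOn (fun u : ℝ => (u - 1) ^ (a - 2) * (u + 1) ^ (b - 1))
      (Ioi (2:ℝ)) volume := by
    have hmaj : IntegrableOn (fun u : ℝ => u ^ (α - 3) / 2 ^ (α - 3)) (Ioi (2:ℝ)) volume :=
      (integrableOn_Ioi_rpow_of_lt (by linarith) (by norm_num)).div_const _
    refine Integrable.mono hmaj
      ((hcont (Ioi 2) (fun u hu => by exact lt_trans one_lt_two hu) (a - 2)
        (b - 1)).aestronglyMeasurable measurableSet_Ioi) ?_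
    filter_upwards [ae_restrict_mem measurableSet_Ioi] with u hu
    have hu2 : (2:ℝ) < u := hu
    have h0 : (0:ℝ) < u / 2 := by linarith
    have h1 : 0 < u - 1 := by linarith
    have h2 : 0 < u + 1 := by linarith
    rw [Real.norm_eq_abs, Real.norm_eq_abs, abs_of_nonneg (by positivity),
      abs_of_nonneg (by positivity)]
    calc (u - 1) ^ (a - 2) * (u + 1) ^ (b - 1)
        ≤ (u / 2) ^ (a - 2) * (u / 2) ^ (b - 1) := by
          apply mul_le_mul _ _ (by positivity) (by positivity)
          · exact Real.rpow_le_rpow_of_nonpos h0 (by linarith) (by linarith)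
          · exact Real.rpow_le_rpow_of_nonpos h0 (by linarith) (by linarith)
      _ = (u / 2) ^ (α - 3) := by
          rw [← Real.rpow_add h0, show a - 2 + (b - 1) = α - 3 by rw [← hab]; ring]
      _ = u ^ (α - 3) / 2 ^ (α - 3) := Real.div_rpow (by linarith) (by norm_num) _
  have hGint : IntegrableOn G (Ioi (2:ℝ)) volume := hGbase.const_mul _
  -- the limit
  refine ⟨(f 2 - (α - 1) * ∫ u in (1:ℝ)..2, ψ u) + ∫ u in Ioi (2:ℝ), G u, ?_⟩
  have htend : Tendsto (fun x : ℝ =>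
      (f 2 - (α - 1) * ∫ u in (1:ℝ)..2, ψ u) + ∫ u in (2:ℝ)..x, G u) atTop
      (𝓝 ((f 2 - (α - 1) * ∫ u in (1:ℝ)..2, ψ u) + ∫ u in Ioi (2:ℝ), G u)) :=
    tendsto_const_nhds.add (intervalIntegral_tendsto_integral_Ioi 2 hGint tendsto_id)
  refine htend.congr' ?_
  filter_upwards [eventually_ge_atTop (2:ℝ)] with x hx
  have hx1 : (1:ℝ) < x := lt_of_lt_of_le one_lt_two hx
  have hsI : ∀ u ∈ uIcc (2:ℝ) x, 1 < u := by
    intro u hu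
    rw [uIcc_of_le hx] at hu
    linarith [hu.1]
  have hψ2x : IntervalIntegrable ψ volume 2 x :=
    (hcont _ hsI (a - 1) (b - 1)).intervalIntegrable
  have hh'int : IntervalIntegrable h' volume 2 x :=
    ((continuousOn_const.mul (hcont _ hsI (a - 2) b)).add
      (continuousOn_const.mul (hcont _ hsI (a - 1) (b - 1)))).intervalIntegrable
  have hFTC : ∫ u in (2:ℝ)..x, h' u = f x - f 2 :=
    intervalIntegral.integral_eq_sub_of_hasDerivAt (fun u hu => hderiv u (hsI u hu)) hh'int
  have hsplit : (∫ u in (1:ℝ)..x, ψ u) = (∫ u in (1:ℝ)..2, ψ u) + ∫ u in (2:ℝ)..x, ψ u :=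
    (intervalIntegral.integral_add_adjacent_intervals hψ12 hψ2x).symm
  have hcongr : (∫ u in (2:ℝ)..x, G u) = ∫ u in (2:ℝ)..x, (h' u - (α - 1) * ψ u) := by
    apply intervalIntegral.integral_congr
    intro u hu
    exact (hkey u (hsI u hu)).symm
  have hsub : (∫ u in (2:ℝ)..x, (h' u - (α - 1) * ψ u))
      = (∫ u in (2:ℝ)..x, h' u) - (α - 1) * ∫ u in (2:ℝ)..x, ψ u := by
    rw [intervalIntegral.integral_sub hh'int (hψ2x.const_mul _),
      intervalIntegral.integral_const_mul]
  have hfx : (x + 1) * ψ x = f x := by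
    simp only [hψdef, hf]
    have e : (x + 1) ^ b = (x + 1) ^ (b - 1) * (x + 1) := by
      rw [← Real.rpow_add_one (by intro h; linarith : x + 1 ≠ 0) (b - 1)]; congr 1; ring
    rw [e]; ring
  rw [hcongr, hsub, hFTC, hsplit, hfx]
  ring
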